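/- arXiv:2010.13475 — 3 statements merged into one kernel-verified Lean document; each statement's English description precedes it below -/
import Mathlib

section
/- For every integer n ≥ 1, the center of the group U_{6n} is the cyclic subgroup generated by a², i.e., Z(U_{6n}) = ⟨a²⟩ = {a^{2s} : 0 ≤ s ≤ n−1}, a subgroup of order n. -/
/-- The inversion automorphism of `Multiplicative (ZMod 3)` (i.e. `b ↦ b⁻¹`). -/
def negAut : MulAut (Multiplicative (ZMod 3)) := MulEquiv.inv (Multiplicative (ZMod 3))

lemma negAut_sq : negAut * negAut = 1 := by
  ext x
  simp [negAut]

/-- The action of `ZMod (2*n)` on `Multiplicative (ZMod 3)`, where the generator acts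
by inversion (negation). -/
def U6nAct (n : ℕ) : Multiplicative (ZMod (2 * n)) →* MulAut (Multiplicative (ZMod 3)) :=
  AddMonoidHom.toMultiplicativeLeft
    (ZMod.lift (2 * n) ⟨zmultiplesHom _ (Additive.ofMul negAut), by
      show ((2 * n : ℕ) : ℤ) • Additive.ofMul negAut = 0
      have : negAut ^ (2 * n) = 1 := by
        rw [pow_mul, pow_two, negAut_sq, one_pow]
      rw [← zpow_natCast negAut, Nat.cast_mul] at this
      rw [show ((2 * n : ℕ) : ℤ) • Additive.ofMul negAut
            = Additive.ofMul (negAut ^ ((2 * n : ℕ) : ℤ)) from rfl]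
      rw [Nat.cast_mul, this]; rfl⟩)

/-- The group `U_{6n} = ⟨a, b | a^(2n) = b³ = 1, a⁻¹ b a = b⁻¹⟩`, realized as the
semidirect product `(ZMod 3) ⋊ (ZMod (2n))` where the generator of `ZMod (2n)` acts by
negation. -/
abbrev U6n (n : ℕ) := SemidirectProduct (Multiplicative (ZMod 3))
    (Multiplicative (ZMod (2 * n))) (U6nAct n)

/-- The generator `a` of `U_{6n}`, of order `2n`. -/
def Ua (n : ℕ) : U6n n := SemidirectProduct.inr (Multiplicative.ofAdd 1)

/-- The generator `b` of `U_{6n}`, of order `3`. -/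
def Ub (n : ℕ) : U6n n := SemidirectProduct.inl (Multiplicative.ofAdd 1)

/-- The non-commuting graph of `U_{6n}`: vertices are the non-central elements, two
distinct vertices are adjacent iff they do not commute. -/
def ncGraph (n : ℕ) : SimpleGraph {x : U6n n // x ∉ Subgroup.center (U6n n)} where
  Adj u v := u.val * v.val ≠ v.val * u.val
  symm := ⟨fun _ _ h => fun e => h e.symm⟩
  loopless := ⟨fun _ h => h rfl⟩

/- ### Auxiliary lemmas -/

lemma act_intCast (n : ℕ) (m : ℤ) :
    (U6nAct n) (Multiplicative.ofAdd ((m : ZMod (2 * n)))) = negAut ^ m := by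
  unfold U6nAct
  rw [AddMonoidHom.toMultiplicativeLeft]
  simp only [Equiv.coe_fn_mk, MonoidHom.coe_mk, OneHom.coe_mk, toAdd_ofAdd]
  exact congrArg Additive.toMul (ZMod.lift_coe (2 * n) _ m)

lemma negAut_zpow_two (k : ℤ) : negAut ^ (2 * k) = 1 := by
  have h2 : negAut ^ (2 : ℤ) = 1 := by
    rw [show (2 : ℤ) = ((2 : ℕ) : ℤ) from rfl, zpow_natCast, pow_two, negAut_sq]
  rw [zpow_mul, h2, one_zpow]

lemma Ua_zpow (n : ℕ) (z : ℤ) :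
    Ua n ^ z = SemidirectProduct.inr (Multiplicative.ofAdd ((z : ZMod (2 * n)))) := by
  rw [Ua, ← map_zpow]
  congr 1
  rw [← ofAdd_zsmul]
  congr 1
  simp

lemma Ua_pow (n : ℕ) (s : ℕ) :
    Ua n ^ s = SemidirectProduct.inr (Multiplicative.ofAdd (((s : ℤ) : ZMod (2 * n)))) := by
  rw [← zpow_natCast, Ua_zpow]

lemma center_eq (n : ℕ) :
    Subgroup.center (U6n n) = Subgroup.zpowers (Ua n ^ 2) := by
  have hUa2 : Ua n ^ 2 = Ua n ^ (2 : ℤ) := by rw [zpow_two, pow_two]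
  ext x
  rw [Subgroup.mem_center_iff, Subgroup.mem_zpowers_iff]
  constructor
  · intro h
    -- from commuting with a : x.left = 1
    have h1 := congrArg SemidirectProduct.left (h (Ua n))
    have hact1 : (U6nAct n) (Multiplicative.ofAdd (1 : ZMod (2 * n))) = negAut := by
      have := act_intCast n 1
      simpa using this
    simp only [Ua, SemidirectProduct.mul_left, SemidirectProduct.left_inr,
      SemidirectProduct.right_inr, one_mul, hact1, map_one, mul_one] at h1
    -- h1 : negAut x.left = x.left
    have hleft : x.left = 1 := by
      have : x.left⁻¹ = x.left := h1
      revert this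
      generalize x.left = y
      revert y; decide
    -- from commuting with b : the action of x.right is trivial on ofAdd 1
    obtain ⟨m, hm⟩ := ZMod.intCast_surjective (Multiplicative.toAdd x.right)
    have hright : x.right = Multiplicative.ofAdd ((m : ZMod (2 * n))) := by
      rw [hm]; rfl
    have h2 := congrArg SemidirectProduct.left (h (Ub n))
    simp only [Ub, SemidirectProduct.mul_left, SemidirectProduct.left_inl,
      SemidirectProduct.right_inl, map_one, mul_one, one_mul, hleft, hright,
      act_intCast] at h2
    -- h2 : ofAdd 1 = (negAut ^ m) (ofAdd 1)  (up to orientation)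
    rcases Int.even_or_odd m with ⟨k, hk⟩ | ⟨k, hk⟩
    · refine ⟨k, ?_⟩
      rw [hUa2, ← zpow_mul, Ua_zpow]
      have : x = ⟨x.left, x.right⟩ := rfl
      rw [this, hleft, hright, hk]
      ext <;> simp [two_mul]
    · exfalso
      rw [hk] at h2
      have hodd : negAut ^ (2 * k + 1) = negAut := by
        rw [zpow_add, negAut_zpow_two, one_mul, zpow_one]
      rw [hodd] at h2
      have : (Multiplicative.ofAdd (1 : ZMod 3))⁻¹ = Multiplicative.ofAdd (1 : ZMod 3) := by
        exact_mod_cast h2.symm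
      revert this; decide
  · rintro ⟨k, rfl⟩ g
    rw [hUa2, ← zpow_mul, Ua_zpow]
    ext
    · simp only [SemidirectProduct.mul_left, SemidirectProduct.left_inr,
        SemidirectProduct.right_inr, act_intCast, negAut_zpow_two, MulAut.one_apply,
        map_one, one_mul, mul_one]
    · simp [mul_comm]

/-- The center of `U_{6n}` is the cyclic subgroup generated by `a²`, which consists of the
elements `a^(2s)` for `0 ≤ s ≤ n-1`, and has order `n`. -/
theorem U6n_center (n : ℕ) (hn : 1 ≤ n) :
    Subgroup.center (U6n n) = Subgroup.zpowers (Ua n ^ 2) ∧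
    (Subgroup.center (U6n n) : Set (U6n n)) = {x | ∃ s < n, x = Ua n ^ (2 * s)} ∧
    Nat.card (Subgroup.center (U6n n)) = n := by
  have hUa2 : Ua n ^ 2 = Ua n ^ (2 : ℤ) := by rw [zpow_two, pow_two]
  refine ⟨center_eq n, ?_, ?_⟩
  · rw [center_eq n]
    ext x
    simp only [SetLike.mem_coe, Subgroup.mem_zpowers_iff, Set.mem_setOf_eq]
    constructor
    · rintro ⟨k, rfl⟩
      refine ⟨(k % (n : ℤ)).toNat, ?_, ?_⟩
      · have hpos : (0 : ℤ) < n := by exact_mod_cast hn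
        have := Int.emod_lt_of_pos k hpos
        omega
      · have hnn : (0 : ℤ) ≤ k % (n : ℤ) := Int.emod_nonneg k (by positivity)
        rw [hUa2, ← zpow_mul, Ua_zpow, Ua_pow]
        refine congrArg SemidirectProduct.inr (congrArg Multiplicative.ofAdd ?_)
        rw [ZMod.intCast_eq_intCast_iff]
        push_cast [Int.toNat_of_nonneg hnn]
        have h : k ≡ k % (n : ℤ) [ZMOD (n : ℤ)] := (Int.emod_emod_of_dvd k dvd_rfl).symm
        have h2 : (2 : ℤ) * k ≡ 2 * (k % (n : ℤ)) [ZMOD 2 * (n : ℤ)] := h.mul_left'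
        simpa [mul_comm] using h2
    · rintro ⟨s, _, rfl⟩
      exact ⟨s, by rw [zpow_natCast, ← pow_mul]⟩
  · rw [center_eq n, Nat.card_zpowers]
    have h2n : (2 * n) ≠ 0 := by omega
    have : orderOf (Ua n ^ 2) = addOrderOf ((2 : ℕ) : ZMod (2 * n)) := by
      rw [Ua_pow]
      rw [orderOf_injective _ SemidirectProduct.inr_injective]
      push_cast
      rfl
    rw [this, ZMod.addOrderOf_coe _ h2n, Nat.gcd_comm, Nat.gcd_eq_left ⟨n, rfl⟩]
    omega
end

section
/- For every integer n ≥ 1, the independence number of the non-commuting graph Γ(U_{6n}) is α(Γ(U_{6n})) = 2n. -/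
def par (n : ℕ) : ZMod (2*n) →+* ZMod 2 := ZMod.castHom (Dvd.intro n rfl) (ZMod 2)

lemma negAut_pow (k : ℕ) : negAut ^ k = if Even k then 1 else negAut := by
  have h2 : negAut ^ 2 = 1 := by rw [sq, negAut_sq]
  rcases Nat.even_or_odd k with ⟨m, hm⟩ | ⟨m, hm⟩
  · subst hm
    rw [if_pos ⟨m, rfl⟩, ← two_mul, pow_mul, h2, one_pow]
  · subst hm
    rw [if_neg (by simp [Nat.odd_iff.mp ⟨m, rfl⟩, Nat.even_iff]), pow_succ, pow_mul, h2, one_pow, one_mul]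

lemma act_apply (n : ℕ) [NeZero (2*n)] (t : ZMod (2*n)) (y : Multiplicative (ZMod 3)) :
    (U6nAct n (Multiplicative.ofAdd t)) y = if par n t = 0 then y else y⁻¹ := by
  have ht : ((t.val : ℤ) : ZMod (2*n)) = t := by
    push_cast
    rw [ZMod.natCast_val, ZMod.cast_id]
  have : U6nAct n (Multiplicative.ofAdd t) = negAut ^ t.val := by
    conv_lhs => rw [← ht]
    simp only [U6nAct, AddMonoidHom.coe_toMultiplicativeLeft, Function.comp_apply,
      toAdd_ofAdd, ZMod.lift_coe, AddMonoidHom.coe_mk, ZeroHom.coe_mk, zmultiplesHom_apply]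
    rw [← zpow_natCast negAut]
    rfl
  rw [this, negAut_pow]
  have hp : par n t = 0 ↔ Even t.val := by
    rw [par, ZMod.castHom_apply, ← ZMod.natCast_val, ZMod.natCast_eq_zero_iff]
    exact ⟨fun h => (Nat.even_iff).mpr (Nat.mod_eq_zero_of_dvd h), fun h => h.two_dvd⟩
  by_cases h : Even t.val
  · rw [if_pos h, if_pos (hp.mpr h)]; rfl
  · rw [if_neg h, if_neg (fun c => h (hp.mp c))]; rfl

lemma comm_iff (n : ℕ) [NeZero (2*n)] (u v : U6n n) :
    u * v = v * u ↔
      u.left * (if par n (Multiplicative.toAdd u.right) = 0 then v.left else v.left⁻¹)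
        = v.left * (if par n (Multiplicative.toAdd v.right) = 0 then u.left else u.left⁻¹) := by
  rw [SemidirectProduct.ext_iff]
  simp only [SemidirectProduct.mul_left, SemidirectProduct.mul_right,
    mul_comm u.right v.right, and_true]
  conv_lhs => rw [← ofAdd_toAdd u.right, ← ofAdd_toAdd v.right,
    act_apply, act_apply]

lemma mem_center_iff (n : ℕ) [NeZero (2*n)] (z : U6n n) :
    z ∈ Subgroup.center (U6n n) ↔
      z.left = 1 ∧ par n (Multiplicative.toAdd z.right) = 0 := by
  rw [Subgroup.mem_center_iff]
  constructor
  · intro h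
    have ha := (comm_iff n z (SemidirectProduct.inr (Multiplicative.ofAdd 1))).mp
      (h _).symm
    have hb := (comm_iff n z (SemidirectProduct.inl (Multiplicative.ofAdd 1))).mp
      (h _).symm
    simp only [SemidirectProduct.left_inr, SemidirectProduct.right_inr,
      SemidirectProduct.left_inl, SemidirectProduct.right_inl] at ha hb
    have h1 : par n (Multiplicative.toAdd (Multiplicative.ofAdd (1 : ZMod (2*n)))) = 1 := map_one (par n)
    have h0 : par n (Multiplicative.toAdd (1 : Multiplicative (ZMod (2*n)))) = 0 := map_zero (par n)
    simp only [h1, h0, one_ne_zero, if_false, if_true, ite_self, mul_one, one_mul,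
      inv_one, reduceIte] at ha hb
    have hL : z.left = 1 := by
      have key : ∀ x : Multiplicative (ZMod 3), x = x⁻¹ → x = 1 := by decide
      exact key _ ha
    refine ⟨hL, ?_⟩
    by_contra hp
    rw [if_neg hp, hL] at hb
    revert hb; decide
  · rintro ⟨h1, h2⟩ g
    rw [comm_iff, h1, h2, if_pos rfl]
    simp

lemma par_surj (n : ℕ) [NeZero (2*n)] : Function.Surjective (par n) := fun b =>
  ⟨(b.val : ZMod (2*n)), by rw [map_natCast, ZMod.natCast_val, ZMod.cast_id]⟩

lemma card_par_eq_zero (n : ℕ) (hn : 1 ≤ n) [NeZero (2*n)] :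
    Nat.card {t : ZMod (2*n) // par n t = 0} = n := by
  set f := (par n).toAddMonoidHom with hf
  have hsurj : Function.Surjective f := par_surj n
  have hq := AddSubgroup.card_eq_card_quotient_mul_card_addSubgroup f.ker
  have he : Nat.card (ZMod (2*n) ⧸ f.ker) = 2 :=
    ((QuotientAddGroup.quotientKerEquivOfSurjective f hsurj).toEquiv |> Nat.card_congr).trans
      (by simp [Nat.card_eq_fintype_card])
  have hcards : Nat.card (ZMod (2*n)) = 2 * n := by simp [Nat.card_eq_fintype_card, ZMod.card]
  have hker : Nat.card {t : ZMod (2*n) // par n t = 0} = Nat.card f.ker :=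
    Nat.card_congr (Equiv.subtypeEquivRight (fun t => (f.mem_ker).symm))
  rw [hker]
  rw [he, hcards] at hq
  omega

lemma card_par_eq_one (n : ℕ) (hn : 1 ≤ n) [NeZero (2*n)] :
    Nat.card {t : ZMod (2*n) // par n t = 1} = n := by
  have h1 : Nat.card {t : ZMod (2*n) // par n t = 1}
      = Nat.card {t : ZMod (2*n) // par n t = 0} := by
    refine Nat.card_congr (Equiv.subtypeEquiv (Equiv.addRight (1 : ZMod (2*n))) (fun t => ?_))
    simp only [Equiv.coe_addRight, map_add, map_one]
    have : ∀ c : ZMod 2, c = 1 ↔ c + 1 = 0 := by decide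
    exact this _
  rw [h1, card_par_eq_zero n hn]

lemma card_zmod3_ne_one : Nat.card {x : Multiplicative (ZMod 3) // x ≠ 1} = 2 := by
  rw [Nat.card_eq_fintype_card]
  decide

/-- The independence number of the non-commuting graph of `U_{6n}` is `2n`: there is an
independent set of size `2n`, and every independent set has size at most `2n`. -/
theorem U6n_indep_number (n : ℕ) (hn : 1 ≤ n) :
    IsGreatest {k | ∃ S : Set {x : U6n n // x ∉ Subgroup.center (U6n n)},
      S.Pairwise (fun u v => ¬ (ncGraph n).Adj u v) ∧ S.ncard = k} (2 * n) := by
  haveI : NeZero (2*n) := ⟨by omega⟩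
  haveI : Finite (U6n n) := Finite.of_injective
    (fun g => (g.left, g.right))
    (fun a b h => SemidirectProduct.ext (congrArg Prod.fst h) (congrArg Prod.snd h))
  set V := {x : U6n n // x ∉ Subgroup.center (U6n n)} with hV
  -- the big independent set
  set S₀ : Set V := {v : V | v.1.left ≠ 1 ∧ par n (Multiplicative.toAdd v.1.right) = 0}
    with hS₀
  have hcard₀ : S₀.ncard = 2 * n := by
    rw [← Nat.card_coe_set_eq]
    have e : ↥S₀ ≃ {x : Multiplicative (ZMod 3) // x ≠ 1} × {t : ZMod (2*n) // par n t = 0} :=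
      { toFun := fun v => (⟨v.1.1.left, v.2.1⟩, ⟨Multiplicative.toAdd v.1.1.right, v.2.2⟩)
        invFun := fun p => ⟨⟨⟨p.1.1, Multiplicative.ofAdd p.2.1⟩, by
            rw [mem_center_iff]
            exact fun hc => p.1.2 hc.1⟩, ⟨p.1.2, p.2.2⟩⟩
        left_inv := by rintro ⟨⟨⟨x, t⟩, hc⟩, hs⟩; rfl
        right_inv := by rintro ⟨⟨x, hx⟩, ⟨t, ht⟩⟩; rfl }
    rw [Nat.card_congr e, Nat.card_prod, card_zmod3_ne_one, card_par_eq_zero n hn]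
  have hind₀ : S₀.Pairwise (fun u v => ¬ (ncGraph n).Adj u v) := by
    intro u hu v hv _
    show ¬ (u.1 * v.1 ≠ v.1 * u.1)
    rw [not_not, comm_iff, hu.2, hv.2, if_pos rfl, if_pos rfl]
    exact mul_comm _ _
  constructor
  · exact ⟨S₀, hind₀, hcard₀⟩
  · rintro k ⟨S, hS, rfl⟩
    by_cases hodd : ∃ u ∈ S, par n (Multiplicative.toAdd u.1.right) ≠ 0
    · obtain ⟨u, huS, hu⟩ := hodd
      have hu1 : par n (Multiplicative.toAdd u.1.right) = 1 := by
        have : ∀ c : ZMod 2, c ≠ 0 → c = 1 := by decide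
        exact this _ hu
      set T : Set V := {v : V | v.1.left = u.1.left ∧ par n (Multiplicative.toAdd v.1.right) = 1}
        with hT
      have hsub : S ⊆ T := by
        intro v hvS
        rcases eq_or_ne v u with rfl | hne
        · exact ⟨rfl, hu1⟩
        · have hcomm : u.1 * v.1 = v.1 * u.1 := not_not.mp (hS huS hvS hne.symm)
          rw [comm_iff, hu1] at hcomm
          simp only [one_ne_zero, if_false] at hcomm
          rcases eq_or_ne (par n (Multiplicative.toAdd v.1.right)) 0 with hv0 | hv0
          · rw [if_pos hv0] at hcomm
            exfalso
            have hv1 : v.1.left = 1 := by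
              have key : ∀ x y : Multiplicative (ZMod 3), x * y⁻¹ = y * x → y = 1 := by decide
              exact key _ _ hcomm
            exact v.2 ((mem_center_iff n v.1).mpr ⟨hv1, hv0⟩)
          · rw [if_neg hv0] at hcomm
            have hv1 : par n (Multiplicative.toAdd v.1.right) = 1 := by
              have : ∀ c : ZMod 2, c ≠ 0 → c = 1 := by decide
              exact this _ hv0
            have : v.1.left = u.1.left := by
              have key : ∀ x y : Multiplicative (ZMod 3), x * y⁻¹ = y * x⁻¹ → y = x := by decide
              exact key _ _ hcomm
            exact ⟨this, hv1⟩
      have hTcard : T.ncard = n := by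
        rw [← Nat.card_coe_set_eq]
        have e : ↥T ≃ {t : ZMod (2*n) // par n t = 1} :=
          { toFun := fun v => ⟨Multiplicative.toAdd v.1.1.right, v.2.2⟩
            invFun := fun t => ⟨⟨⟨u.1.left, Multiplicative.ofAdd t.1⟩, by
                rw [mem_center_iff]
                rintro ⟨-, h0⟩
                simp only [toAdd_ofAdd] at h0
                rw [t.2] at h0
                exact one_ne_zero h0⟩, ⟨rfl, t.2⟩⟩
            left_inv := by
              rintro ⟨⟨⟨x, t⟩, hc⟩, hx, ht⟩
              exact Subtype.ext (Subtype.ext (SemidirectProduct.ext hx.symm rfl))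
            right_inv := by rintro ⟨t, ht⟩; rfl }
        rw [Nat.card_congr e, card_par_eq_one n hn]
      calc S.ncard ≤ T.ncard := Set.ncard_le_ncard hsub T.toFinite
        _ = n := hTcard
        _ ≤ 2 * n := by omega
    · push_neg at hodd
      have hsub : S ⊆ S₀ := by
        intro v hvS
        refine ⟨?_, hodd v hvS⟩
        intro h1
        exact v.2 ((mem_center_iff n v.1).mpr ⟨h1, hodd v hvS⟩)
      calc S.ncard ≤ S₀.ncard := Set.ncard_le_ncard hsub S₀.toFinite
        _ = 2 * n := hcard₀
end

section
/- For every integer n ≥ 1, the chromatic number of the non-commuting graph Γ(U_{6n}) is χ(Γ(U_{6n})) = 4. -/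
/- ===================== auxiliary development ===================== -/

def actF (n : ℕ) : {f : ℤ →+ Additive (MulAut (Multiplicative (ZMod 3))) // f (2 * n) = 0} :=
  ⟨zmultiplesHom _ (Additive.ofMul negAut), by
      show ((2 * n : ℕ) : ℤ) • Additive.ofMul negAut = 0
      have : negAut ^ (2 * n) = 1 := by
        rw [pow_mul, pow_two, negAut_sq, one_pow]
      rw [← zpow_natCast negAut, Nat.cast_mul] at this
      rw [show ((2 * n : ℕ) : ℤ) • Additive.ofMul negAut
            = Additive.ofMul (negAut ^ ((2 * n : ℕ) : ℤ)) from rfl]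
      rw [Nat.cast_mul, this]; rfl⟩

lemma U6nAct_eq (n : ℕ) :
    U6nAct n = AddMonoidHom.toMultiplicativeLeft (ZMod.lift (2 * n) (actF n)) := rfl

lemma U6nAct_intCast (n : ℕ) (m : ℤ) :
    U6nAct n (Multiplicative.ofAdd ((m : ZMod (2 * n)))) = negAut ^ m := by
  rw [U6nAct_eq]
  show Additive.toMul ((ZMod.lift (2 * n) (actF n)) ((m : ZMod (2 * n)))) = _
  rw [ZMod.lift_coe]
  rfl

lemma negAut_zpow (m : ℤ) (x : Multiplicative (ZMod 3)) :
    (negAut ^ m) x = if Even m then x else x⁻¹ := by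
  rcases Int.even_or_odd m with ⟨k, hk⟩ | ⟨k, hk⟩
  · have : negAut ^ m = 1 := by
      subst hk
      rw [show k + k = 2 * k by ring, zpow_mul]
      rw [show (negAut : MulAut (Multiplicative (ZMod 3))) ^ (2:ℤ) = 1 by
        rw [show ((2:ℤ)) = ((2:ℕ):ℤ) from rfl, zpow_natCast, pow_two, negAut_sq]]
      rw [one_zpow]
    rw [this, if_pos ⟨k, hk⟩]
    rfl
  · have he : ¬ Even m := by
      subst hk; simp [Int.even_add_one, parity_simps]
    have : negAut ^ m = negAut := by
      subst hk
      rw [zpow_add, zpow_one, zpow_mul]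
      rw [show (negAut : MulAut (Multiplicative (ZMod 3))) ^ (2:ℤ) = 1 by
        rw [show ((2:ℤ)) = ((2:ℕ):ℤ) from rfl, zpow_natCast, pow_two, negAut_sq]]
      rw [one_zpow, one_mul]
    rw [this, if_neg he]
    rfl

/-- Parity of the `ZMod (2n)`-component. -/
def eps (n : ℕ) (x : U6n n) : ZMod 2 :=
  ZMod.castHom ⟨n, rfl⟩ (ZMod 2) (Multiplicative.toAdd x.right)

lemma U6nAct_apply (n : ℕ) (hn : n ≠ 0) (g : Multiplicative (ZMod (2 * n)))
    (x : Multiplicative (ZMod 3)) :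
    U6nAct n g x
      = if ZMod.castHom ⟨n, rfl⟩ (ZMod 2) (Multiplicative.toAdd g) = 0 then x else x⁻¹ := by
  haveI : NeZero (2 * n) := ⟨by omega⟩
  set k : ℕ := (Multiplicative.toAdd g).val with hk
  have hg : g = Multiplicative.ofAdd (((k : ℤ) : ZMod (2 * n))) := by
    rw [hk]
    push_cast
    rw [ZMod.natCast_rightInverse (Multiplicative.toAdd g)]
    simp
  rw [hg, U6nAct_intCast, negAut_zpow]
  have h2 : ZMod.castHom (⟨n, rfl⟩ : (2:ℕ) ∣ 2 * n) (ZMod 2)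
      (Multiplicative.toAdd (Multiplicative.ofAdd (((k : ℤ) : ZMod (2 * n)))))
      = (k : ZMod 2) := by
    rw [toAdd_ofAdd]
    push_cast
    rw [map_natCast]
  rw [h2]
  by_cases h : Even (k : ℤ)
  · rw [if_pos h, if_pos]
    rw [ZMod.natCast_eq_zero_iff]
    rw [Int.even_coe_nat] at h
    exact h.two_dvd
  · rw [if_neg h, if_neg]
    intro hc
    apply h
    rw [Int.even_coe_nat]
    rw [ZMod.natCast_eq_zero_iff] at hc
    obtain ⟨c, hcc⟩ := hc
    exact ⟨c, by omega⟩

lemma commute_iff (n : ℕ) (hn : n ≠ 0) (x y : U6n n) :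
    x * y = y * x ↔
      ((eps n x = 0 ∧ eps n y = 0) ∨
       (eps n x = 0 ∧ eps n y ≠ 0 ∧ x.left = 1) ∨
       (eps n x ≠ 0 ∧ eps n y = 0 ∧ y.left = 1) ∨
       (eps n x ≠ 0 ∧ eps n y ≠ 0 ∧ x.left = y.left)) := by
  have hmul : x * y = y * x ↔
      x.left * U6nAct n x.right y.left = y.left * U6nAct n y.right x.left := by
    constructor
    · intro h
      have := congrArg SemidirectProduct.left h
      simpa using this
    · intro h
      ext
      · simpa using congrArg Multiplicative.toAdd h
      · simp [mul_comm]
  rw [hmul, U6nAct_apply n hn, U6nAct_apply n hn]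
  show (x.left * (if eps n x = 0 then y.left else y.left⁻¹)
      = y.left * (if eps n y = 0 then x.left else x.left⁻¹)) ↔ _
  by_cases hx : eps n x = 0 <;> by_cases hy : eps n y = 0 <;>
    simp only [hx, hy, if_pos, if_neg, if_true, if_false, ne_eq, not_true, not_false_iff]
  · simp [mul_comm]
  · simp only [hx, hy, true_and, false_and, and_false, false_or, or_false, not_false_iff,
      and_true, not_true_eq_false]
    revert hx hy
    generalize x.left = a
    generalize y.left = b
    intro _ _
    constructor
    · intro h
      have : ∀ a b : Multiplicative (ZMod 3), a * b = b * a⁻¹ → a = 1 := by decide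
      exact this a b h
    · intro h; subst h; simp
  · simp only [hx, hy, true_and, false_and, and_false, false_or, or_false, not_false_iff,
      and_true, not_true_eq_false]
    revert hx hy
    generalize x.left = a
    generalize y.left = b
    intro _ _
    constructor
    · intro h
      have : ∀ a b : Multiplicative (ZMod 3), a * b⁻¹ = b * a → b = 1 := by decide
      exact this a b h
    · intro h; subst h; simp
  · simp only [hx, hy, true_and, false_and, and_false, false_or, or_false, not_false_iff,
      and_true, not_true_eq_false]
    revert hx hy
    generalize x.left = a
    generalize y.left = b
    intro _ _
    constructor
    · intro h
      have : ∀ a b : Multiplicative (ZMod 3), a * b⁻¹ = b * a⁻¹ → a = b := by decide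
      exact this a b h
    · intro h; subst h; rfl

lemma eps_Ua (n : ℕ) : eps n (Ua n) = 1 :=
  map_one (ZMod.castHom (⟨n, rfl⟩ : (2:ℕ) ∣ 2 * n) (ZMod 2))

lemma left_Ua (n : ℕ) : (Ua n).left = 1 := rfl

lemma eps_Ub (n : ℕ) : eps n (Ub n) = 0 :=
  map_zero (ZMod.castHom (⟨n, rfl⟩ : (2:ℕ) ∣ 2 * n) (ZMod 2))

lemma left_Ub (n : ℕ) : (Ub n).left = Multiplicative.ofAdd 1 := rfl

lemma mem_center_iff_s11 (n : ℕ) (hn : n ≠ 0) (x : U6n n) :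
    x ∈ Subgroup.center (U6n n) ↔ x.left = 1 ∧ eps n x = 0 := by
  rw [Subgroup.mem_center_iff]
  constructor
  · intro h
    have ha := h (Ua n)
    have hb := h (Ub n)
    rw [commute_iff n hn] at ha hb
    rw [eps_Ua, left_Ua] at ha
    rw [eps_Ub, left_Ub] at hb
    have h1 : (1 : ZMod 2) ≠ 0 := by decide
    have hofAdd : (Multiplicative.ofAdd (1 : ZMod 3)) ≠ 1 := by decide
    constructor
    · rcases ha with ⟨h0, _⟩ | ⟨h0, _, _⟩ | ⟨_, _, hx⟩ | ⟨_, _, hx⟩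
      · exact absurd h0 h1
      · exact absurd h0 h1
      · exact hx
      · exact hx.symm
    · rcases hb with ⟨_, h0⟩ | ⟨_, _, hx⟩ | ⟨h0, _, _⟩ | ⟨h0, _, _⟩
      · exact h0
      · exact absurd hx hofAdd
      · exact absurd rfl h0
      · exact absurd rfl h0
  · rintro ⟨h1, h2⟩ y
    rw [commute_iff n hn]
    by_cases hy : eps n y = 0
    · exact Or.inl ⟨hy, h2⟩
    · exact Or.inr (Or.inr (Or.inl ⟨hy, h2, h1⟩))

def myCol (n : ℕ) (hn : n ≠ 0) : (ncGraph n).Coloring (Fin 4) :=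
  SimpleGraph.Coloring.mk
    (fun v => if eps n v.val = 0 then 0 else
      ⟨1 + (Multiplicative.toAdd v.val.left).val, by
        have := ZMod.val_lt (Multiplicative.toAdd v.val.left); omega⟩)
    (by
      intro u v hadj heq
      apply hadj
      rw [commute_iff n hn]
      by_cases hu : eps n u.val = 0 <;> by_cases hv : eps n v.val = 0
      · exact Or.inl ⟨hu, hv⟩
      · rw [if_pos hu, if_neg hv] at heq
        simp only [Fin.ext_iff, Fin.val_zero] at heq
        omega
      · rw [if_neg hu, if_pos hv] at heq
        simp only [Fin.ext_iff, Fin.val_zero] at heq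
        omega
      · rw [if_neg hu, if_neg hv] at heq
        have hval := congrArg Fin.val heq
        simp only [Fin.val_mk] at hval
        have hval' : (Multiplicative.toAdd u.val.left).val
            = (Multiplicative.toAdd v.val.left).val := by omega
        have : Multiplicative.toAdd u.val.left = Multiplicative.toAdd v.val.left :=
          ZMod.val_injective 3 hval'
        have hleft : u.val.left = v.val.left := this
        exact Or.inr (Or.inr (Or.inr ⟨hu, hv, hleft⟩)))

lemma adj_iff (n : ℕ) (u v : {x : U6n n // x ∉ Subgroup.center (U6n n)}) :
    (ncGraph n).Adj u v ↔ u.val * v.val ≠ v.val * u.val := Iff.rfl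

/-- The chromatic number of the non-commuting graph of `U_{6n}` is `4`. -/
theorem U6n_chromatic_number (n : ℕ) (hn : 1 ≤ n) :
    (ncGraph n).chromaticNumber = 4 := by
  classical
  have hn' : n ≠ 0 := by omega
  have h1 : (1 : ZMod 2) ≠ 0 := by decide
  have heps : ∀ l : Multiplicative (ZMod 3),
      eps n (⟨l, Multiplicative.ofAdd 1⟩ : U6n n) = 1 := by
    intro l
    exact map_one (ZMod.castHom (⟨n, rfl⟩ : (2:ℕ) ∣ 2 * n) (ZMod 2))
  have hnc0 : (⟨Multiplicative.ofAdd 1, 1⟩ : U6n n) ∉ Subgroup.center (U6n n) := by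
    rw [mem_center_iff_s11 n hn']
    rintro ⟨hl, -⟩
    have hne : Multiplicative.ofAdd (1 : ZMod 3) ≠ 1 := by decide
    exact hne hl
  have hnc : ∀ l : Multiplicative (ZMod 3),
      (⟨l, Multiplicative.ofAdd 1⟩ : U6n n) ∉ Subgroup.center (U6n n) := by
    intro l h
    rw [mem_center_iff_s11 n hn'] at h
    rw [heps l] at h
    exact h1 h.2
  set w0 : {x : U6n n // x ∉ Subgroup.center (U6n n)} :=
    ⟨⟨Multiplicative.ofAdd 1, 1⟩, hnc0⟩ with hw0
  set w1 : {x : U6n n // x ∉ Subgroup.center (U6n n)} :=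
    ⟨⟨1, Multiplicative.ofAdd 1⟩, hnc 1⟩ with hw1
  set w2 : {x : U6n n // x ∉ Subgroup.center (U6n n)} :=
    ⟨⟨Multiplicative.ofAdd 1, Multiplicative.ofAdd 1⟩, hnc _⟩ with hw2
  set w3 : {x : U6n n // x ∉ Subgroup.center (U6n n)} :=
    ⟨⟨Multiplicative.ofAdd 2, Multiplicative.ofAdd 1⟩, hnc _⟩ with hw3
  have heps0 : eps n w0.val = 0 :=
    map_zero (ZMod.castHom (⟨n, rfl⟩ : (2:ℕ) ∣ 2 * n) (ZMod 2))
  have heps1 : eps n w1.val = 1 := heps 1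
  have heps2 : eps n w2.val = 1 := heps _
  have heps3 : eps n w3.val = 1 := heps _
  have hleft0 : w0.val.left = Multiplicative.ofAdd 1 := rfl
  -- adjacency between w0 and the others
  have hadjA : ∀ l (h : (⟨l, Multiplicative.ofAdd 1⟩ : U6n n) ∉ Subgroup.center (U6n n)),
      (ncGraph n).Adj w0 ⟨⟨l, Multiplicative.ofAdd 1⟩, h⟩ := by
    intro l h
    rw [adj_iff, Ne, commute_iff n hn']
    rintro (⟨-, h0⟩ | ⟨-, -, h0⟩ | ⟨h0, -, -⟩ | ⟨h0, -, -⟩)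
    · rw [heps l] at h0; exact h1 h0
    · rw [hleft0] at h0
      have hne : Multiplicative.ofAdd (1 : ZMod 3) ≠ 1 := by decide
      exact hne h0
    · exact h0 heps0
    · exact h0 heps0
  have hadjB : ∀ l l' (hll : l ≠ l')
      (h : (⟨l, Multiplicative.ofAdd 1⟩ : U6n n) ∉ Subgroup.center (U6n n))
      (h' : (⟨l', Multiplicative.ofAdd 1⟩ : U6n n) ∉ Subgroup.center (U6n n)),
      (ncGraph n).Adj ⟨⟨l, Multiplicative.ofAdd 1⟩, h⟩ ⟨⟨l', Multiplicative.ofAdd 1⟩, h'⟩ := by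
    intro l l' hll h h'
    rw [adj_iff, Ne, commute_iff n hn']
    rintro (⟨h0, -⟩ | ⟨h0, -, -⟩ | ⟨-, h0, -⟩ | ⟨-, -, h0⟩)
    · rw [heps l] at h0; exact h1 h0
    · rw [heps l] at h0; exact h1 h0
    · rw [heps l'] at h0; exact h1 h0
    · exact hll h0
  have a01 : (ncGraph n).Adj w0 w1 := hadjA 1 _
  have a02 : (ncGraph n).Adj w0 w2 := hadjA _ _
  have a03 : (ncGraph n).Adj w0 w3 := hadjA _ _
  have a12 : (ncGraph n).Adj w1 w2 := hadjB 1 _ (by decide) _ _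
  have a13 : (ncGraph n).Adj w1 w3 := hadjB 1 _ (by decide) _ _
  have a23 : (ncGraph n).Adj w2 w3 := hadjB _ _ (by decide) _ _
  have hclique : (ncGraph n).IsClique (({w0, w1, w2, w3} : Finset _) : Set _) := by
    intro a ha b hb hne
    simp only [Finset.coe_insert, Set.mem_insert_iff, Finset.coe_singleton,
      Set.mem_singleton_iff] at ha hb
    rcases ha with rfl | rfl | rfl | rfl <;> rcases hb with rfl | rfl | rfl | rfl <;>
      first
        | exact absurd rfl hne
        | exact a01 | exact a02 | exact a03 | exact a12 | exact a13 | exact a23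
        | exact a01.symm | exact a02.symm | exact a03.symm
        | exact a12.symm | exact a13.symm | exact a23.symm
  have hcard : ({w0, w1, w2, w3} : Finset _).card = 4 := by
    rw [Finset.card_insert_of_notMem, Finset.card_insert_of_notMem,
      Finset.card_insert_of_notMem, Finset.card_singleton]
    · simp only [Finset.mem_singleton]; exact a23.ne
    · simp only [Finset.mem_insert, Finset.mem_singleton]
      rintro (h | h)
      exacts [a12.ne h, a13.ne h]
    · simp only [Finset.mem_insert, Finset.mem_singleton]
      rintro (h | h | h)
      exacts [a01.ne h, a02.ne h, a03.ne h]
  refine le_antisymm ?_ ?_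
  · have hcol : (ncGraph n).Colorable 4 := ⟨myCol n hn'⟩
    have := hcol.chromaticNumber_le
    simpa using this
  · have := hclique.card_le_chromaticNumber
    rw [hcard] at this
    simpa using this
end
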